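/- Let k be a field of characteristic p > 0 and G a commutative k-algebra. For any derivation X : A → A of a commutative k-algebra A, the p-fold composite X^p = X ∘ ⋯ ∘ X (p times) is again a derivation of A. -/

import Mathlib

open Finset Nat

theorem deriv_iterate_leibniz {k : Type*} [Field k] {A : Type*} [CommRing A] [Algebra k A]
    (X : Derivation k A A) (n : ℕ) (a b : A) :
    X.toLinearMap^[n] (a * b) =
      ∑ ij ∈ antidiagonal n, n.choose ij.1 • (X.toLinearMap^[ij.1] a * X.toLinearMap^[ij.2] b) := by
  induction n with
  | zero => simp
  | succ n ih =>
    rw [sum_antidiagonal_choose_succ_nsmul (fun i j => X.toLinearMap^[i] a * X.toLinearMap^[j] b) n]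
    have hX : ∀ x y : A, X.toLinearMap (x * y) = x * X.toLinearMap y + X.toLinearMap x * y := by
      intro x y
      have := X.leibniz x y
      simpa only [smul_eq_mul, mul_comm, Derivation.coeFn_coe] using this
    simp only [Function.iterate_succ_apply', ih, map_sum, map_nsmul, hX, smul_add,
      sum_add_distrib]
    congr 1
    refine sum_congr rfl fun ⟨i, j⟩ hij ↦ ?_
    rw [n.choose_symm_of_eq_add (mem_antidiagonal.1 hij).symm]

theorem deriv_iterate_leibniz' {k : Type*} [Field k] {A : Type*} [CommRing A] [Algebra k A]
    (X : Derivation k A A) (n : ℕ) (a b : A) :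
    X.toLinearMap^[n] (a * b) =
      ∑ i ∈ range (n + 1), n.choose i • (X.toLinearMap^[i] a * X.toLinearMap^[n - i] b) := by
  rw [deriv_iterate_leibniz X n a b]
  exact sum_antidiagonal_eq_sum_range_succ
    (fun i j ↦ n.choose i • (X.toLinearMap^[i] a * X.toLinearMap^[j] b)) n

/-- Over a field `k` of characteristic `p > 0`, the `p`-fold composite of a
derivation `X : A → A` of a commutative `k`-algebra `A` is again a derivation. -/
theorem pow_p_derivation (p : ℕ) (hp : p.Prime)
    (k : Type*) [Field k] [CharP k p]
    (A : Type*) [CommRing A] [Algebra k A] (X : Derivation k A A) :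
    ∃ D : Derivation k A A, ∀ a : A, D a = ((X.toLinearMap : A →ₗ[k] A) ^ p) a := by
  set L := (X.toLinearMap : A →ₗ[k] A) with hL
  have hpA : (p : A) = 0 := by
    rw [← map_natCast (algebraMap k A), CharP.cast_eq_zero k p, map_zero]
  have hkill : ∀ x : A, p • x = 0 := fun x => by
    rw [nsmul_eq_mul, hpA, zero_mul]
  have hpow : ∀ (n : ℕ) (x : A), (L ^ n) x = L^[n] x := fun n x => Module.End.pow_apply L n x
  refine ⟨{ toLinearMap := L ^ p,
            map_one_eq_zero' := ?_,
            leibniz' := ?_ }, fun a => rfl⟩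
  · obtain ⟨q, rfl⟩ : ∃ q, p = q + 1 := ⟨p - 1, (Nat.succ_pred_eq_of_pos hp.pos).symm⟩
    show (L ^ (q + 1)) 1 = 0
    rw [pow_succ, Module.End.mul_apply]
    have : L 1 = 0 := X.map_one_eq_zero
    rw [this, map_zero]
  · intro a b
    show (L ^ p) (a * b) = a • (L ^ p) b + b • (L ^ p) a
    rw [hpow, deriv_iterate_leibniz' X p a b]
    rw [Finset.sum_range_succ]
    have hmid : ∑ i ∈ range p, p.choose i • (L^[i] a * L^[p - i] b)
        = a • (L ^ p) b := by
      rw [Finset.sum_eq_single_of_mem 0 (mem_range.2 hp.pos)]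
      · simp [hpow, smul_eq_mul]
      · intro i hi hi0
        obtain ⟨c, hc⟩ := hp.dvd_choose_self hi0 (mem_range.1 hi)
        rw [hc, mul_comm, mul_nsmul, hkill]
    rw [hmid]
    simp [hpow, smul_eq_mul, mul_comm]
    rfl
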